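/- Let a > 0 and let b be differentiable with b'(s)/s → 0 as s → ∞. Define f(s) = exp(a s² + b(s)). Then for any fixed s₁ > 1, (s² · ∫_{s₁}^{s} (log z / z) f(z) dz) / (f(s) · log s) → 1/(2a) as s → ∞. -/

import Mathlib

set_option maxHeartbeats 1000000


open Filter Real

-- Auxiliary lemma: if deriv b s / s → 0 then b s / s² → 0
lemma aux_b_small (b : ℝ → ℝ) (hb : Differentiable ℝ b)
    (hb' : Tendsto (fun s => deriv b s / s) atTop (nhds 0)) :
    Tendsto (fun s => b s / s ^ 2) atTop (nhds 0) := by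
  rw [Metric.tendsto_atTop] at hb' ⊢
  intro ε hε
  obtain ⟨N₀, hN₀⟩ := hb' (ε / 4) (by linarith)
  set M := max N₀ 1 with hM
  have hM1 : (1:ℝ) ≤ M := le_max_right _ _
  -- eventual bound on |b s - b M|
  have key : ∀ s ≥ M, |b s - b M| ≤ ε / 4 * s ^ 2 := by
    intro s hs
    have hMs : M ≤ s := hs
    have hbd : ∀ z ∈ Set.Icc M s, |deriv b z| ≤ ε / 4 * s := by
      intro z hz
      have hz1 : (1:ℝ) ≤ z := le_trans hM1 hz.1
      have hzN : N₀ ≤ z := le_trans (le_max_left _ _) hz.1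
      have := hN₀ z hzN
      rw [Real.dist_eq, sub_zero] at this
      have hz0 : (0:ℝ) < z := by linarith
      rw [abs_div] at this
      have h2 : |deriv b z| < ε / 4 * |z| := by
        rw [div_lt_iff₀ (abs_pos.mpr (ne_of_gt hz0))] at this
        linarith [this]
      have : |z| = z := abs_of_pos hz0
      rw [this] at h2
      nlinarith [hz.2, abs_nonneg (deriv b z)]
    have hint : IntervalIntegrable (deriv b) MeasureTheory.volume M s := by
      apply (intervalIntegrable_const (c := ε / 4 * s)).mono_fun
      · exact (measurable_deriv b).aestronglyMeasurable.restrict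
      · rw [Set.uIoc_of_le hMs]
        refine (MeasureTheory.ae_restrict_iff' measurableSet_Ioc).2 ?_
        filter_upwards with z hz
        rw [Real.norm_eq_abs, Real.norm_eq_abs]
        exact le_trans (hbd z ⟨le_of_lt hz.1, hz.2⟩) (le_abs_self _)
    have hftc : ∫ z in M..s, deriv b z = b s - b M := by
      apply intervalIntegral.integral_deriv_eq_sub (fun z _ => hb z) 
      exact hint
    rw [← hftc]
    have := intervalIntegral.norm_integral_le_of_norm_le_const (C := ε / 4 * s)
      (f := deriv b) (a := M) (b := s) ?_ 
    · rw [Real.norm_eq_abs] at this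
      have habs : |s - M| = s - M := abs_of_nonneg (by linarith)
      rw [habs] at this
      have hs1 : (1:ℝ) ≤ s := le_trans hM1 hMs
      nlinarith [this, hε.le, mul_nonneg (mul_nonneg hε.le (by linarith : (0:ℝ) ≤ s)) (by linarith : (0:ℝ) ≤ M)]
    · intro z hz
      rw [Set.uIoc_of_le hMs] at hz
      simpa [Real.norm_eq_abs] using hbd z ⟨le_of_lt hz.1, hz.2⟩
  refine ⟨max M (4 * |b M| / ε + 1), fun s hs => ?_⟩
  have hsM : M ≤ s := le_trans (le_max_left _ _) hs
  have hs1 : (1:ℝ) ≤ s := le_trans hM1 hsM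
  have hsB : 4 * |b M| / ε + 1 ≤ s := le_trans (le_max_right _ _) hs
  rw [Real.dist_eq, sub_zero]
  have hk := key s hsM
  have hs2 : (1:ℝ) ≤ s ^ 2 := one_le_pow₀ hs1
  rw [abs_div, abs_of_nonneg (by positivity : (0:ℝ) ≤ s ^ 2)]
  rw [div_lt_iff₀ (by positivity)]
  have hbM : |b s| ≤ |b s - b M| + |b M| := by
    calc |b s| = |(b s - b M) + b M| := by ring_nf
    _ ≤ |b s - b M| + |b M| := abs_add_le _ _
  have hBs : |b M| ≤ ε / 4 * s := by
    have h1 : 4 * |b M| / ε ≤ s - 1 := by linarith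
    have h2 : 4 * |b M| ≤ ε * (s - 1) := by
      rw [div_le_iff₀ hε] at h1; linarith [h1]
    nlinarith
  have : |b M| ≤ ε / 4 * s ^ 2 := by nlinarith [abs_nonneg (b M)]
  nlinarith [abs_nonneg (b s)]

theorem stmt_3 (a : ℝ) (ha : 0 < a) (b : ℝ → ℝ) (hb : Differentiable ℝ b)
    (hb' : Tendsto (fun s => deriv b s / s) atTop (nhds 0))
    (f : ℝ → ℝ) (hf : ∀ s, f s = Real.exp (a * s ^ 2 + b s)) (s₁ : ℝ) (hs₁ : 1 < s₁) :
    Tendsto (fun s => (s ^ 2 * ∫ z in s₁..s, (Real.log z / z) * f z) / (f s * Real.log s))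
      atTop (nhds (1 / (2 * a))) := by
  have ha0 : a ≠ 0 := ne_of_gt ha
  set g : ℝ → ℝ := fun z => Real.log z / z * f z with hgdef
  set F : ℝ → ℝ := fun s => ∫ z in s₁..s, g z with hFdef
  set G : ℝ → ℝ := fun z => f z * Real.log z / (2*a*z^2) with hGdef
  set Gd : ℝ → ℝ := fun z => ((f z * (2*a*z + deriv b z) * Real.log z + f z * z⁻¹) * (2*a*z^2)
      - f z * Real.log z * (2*a*(2*z))) / ((2*a*z^2)^2) with hGddef
  set eps : ℝ → ℝ := fun z => (deriv b z * z - 2)/(2*a*z^2) + 1/(2*a*z^2*Real.log z) with hepsdef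
  have hfpos : ∀ s, 0 < f s := fun s => by rw [hf]; exact Real.exp_pos _
  have hfc : Continuous f := by
    have : f = fun s => Real.exp (a * s ^ 2 + b s) := funext hf
    rw [this]
    exact Real.continuous_exp.comp ((continuous_const.mul (continuous_pow 2)).add hb.continuous)
  have hfd : ∀ z, HasDerivAt f (f z * (2*a*z + deriv b z)) z := by
    intro z
    have h1 : HasDerivAt (fun s : ℝ => a * s ^ 2 + b s) (2*a*z + deriv b z) z := by
      have h2 : HasDerivAt (fun s : ℝ => a * s ^ 2) (a * (2 * z)) z :=
        (hasDerivAt_pow 2 z).const_mul a |>.congr_deriv (by simp)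
      have h3 := (hb z).hasDerivAt
      have := h2.add h3
      refine this.congr_deriv ?_
      ring
    have h4 := h1.exp
    have hfe : f = fun s => Real.exp (a * s ^ 2 + b s) := funext hf
    rw [hfe]
    exact h4
  have hGd' : ∀ z : ℝ, z ≠ 0 → HasDerivAt G (Gd z) z := by
    intro z hz
    have h1 : HasDerivAt (fun z => f z * Real.log z)
        (f z * (2*a*z + deriv b z) * Real.log z + f z * z⁻¹) z :=
      (hfd z).mul (Real.hasDerivAt_log hz)
    have h2 : HasDerivAt (fun z : ℝ => 2*a*z^2) (2*a*(2*z)) z := by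
      have := (hasDerivAt_pow 2 z).const_mul (2*a)
      refine this.congr_deriv ?_
      simp
    have h3 : (2*a*z^2) ≠ 0 := mul_ne_zero (by positivity) (pow_ne_zero 2 hz)
    exact h1.div h2 h3
  have hid : ∀ z : ℝ, 1 < z → Gd z = g z * (1 + eps z) := by
    intro z hz1
    have hz0 : z ≠ 0 := by intro h; rw [h] at hz1; norm_num at hz1
    have hlz : Real.log z ≠ 0 := ne_of_gt (Real.log_pos hz1)
    rw [hGddef, hgdef, hepsdef]
    field_simp
    ring
  have heps : Tendsto eps atTop (nhds 0) := by
    have h2a : (0:ℝ) < 2*a := by linarith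
    have hsq : Tendsto (fun z:ℝ => 2*a*z^2) atTop atTop :=
      (tendsto_pow_atTop two_ne_zero).const_mul_atTop h2a
    have hcube : Tendsto (fun z:ℝ => 2*a*z^2*Real.log z) atTop atTop :=
      hsq.atTop_mul_atTop₀ Real.tendsto_log_atTop
    have T1 : Tendsto (fun z => deriv b z / z * (2*a)⁻¹) atTop (nhds 0) := by
      simpa using hb'.mul_const (2*a)⁻¹
    have T2 : Tendsto (fun z:ℝ => -(2 / (2*a*z^2))) atTop (nhds 0) := by
      have h := hsq.inv_tendsto_atTop
      have h2 := h.const_mul (2:ℝ)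
      simp only [mul_zero] at h2
      have := h2.neg
      simp only [neg_zero] at this
      refine this.congr fun z => ?_
      simp [div_eq_mul_inv]
    have T3 : Tendsto (fun z:ℝ => 1/(2*a*z^2*Real.log z)) atTop (nhds 0) := by
      refine hcube.inv_tendsto_atTop.congr fun z => ?_
      simp [one_div]
    have hsum := (T1.add (T2.add T3))
    simp only [add_zero] at hsum
    refine Tendsto.congr' ?_ hsum
    filter_upwards [eventually_ge_atTop (2:ℝ)] with z hz2
    have hz0 : z ≠ 0 := by positivity
    have hlz : Real.log z ≠ 0 := ne_of_gt (Real.log_pos (by linarith))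
    rw [hepsdef]
    field_simp
    ring
  have hG' : Tendsto G atTop atTop := by
    have hbs := aux_b_small b hb hb'
    have hb8 : ∀ᶠ s : ℝ in atTop, |b s| ≤ a/8 * s^2 := by
      have := Metric.tendsto_nhds.mp hbs (a/8) (by linarith)
      filter_upwards [this, eventually_ge_atTop (1:ℝ)] with s hs hs1
      rw [Real.dist_eq, sub_zero, abs_div, abs_of_nonneg (by positivity : (0:ℝ) ≤ s^2)] at hs
      have hsp : (0:ℝ) < s ^ 2 := by positivity
      rw [div_lt_iff₀ hsp] at hs
      nlinarith [hs]
    have hsq : Tendsto (fun z:ℝ => a/8*z^2) atTop atTop :=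
      (tendsto_pow_atTop two_ne_zero).const_mul_atTop (by linarith)
    have hlog2a : ∀ᶠ s : ℝ in atTop, Real.log (2*a) ≤ a/8 * s^2 :=
      hsq.eventually_ge_atTop _
    apply tendsto_atTop_mono' atTop
        (show ∀ᶠ s : ℝ in atTop, Real.exp (a/2 * s^2) ≤ G s from ?_)
        (Real.tendsto_exp_atTop.comp ((tendsto_pow_atTop two_ne_zero).const_mul_atTop (by linarith)))
    filter_upwards [hb8, hlog2a, eventually_ge_atTop (max (Real.exp 1) (8/a))] with s hbb hla hs
    have hse : Real.exp 1 ≤ s := le_trans (le_max_left _ _) hs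
    have hs8 : 8/a ≤ s := le_trans (le_max_right _ _) hs
    have hs1 : (1:ℝ) ≤ s := le_trans (by simpa using Real.one_le_exp (le_refl 1) |>.trans (le_refl _)) hse
    have hsp : (0:ℝ) < s := by linarith
    have hlog1 : (1:ℝ) ≤ Real.log s := by
      rw [show (1:ℝ) = Real.log (Real.exp 1) by rw [Real.log_exp]]
      exact Real.log_le_log (Real.exp_pos 1) hse
    have hlogs : Real.log s ≤ s := Real.log_le_sub_one_of_pos hsp |>.trans (by linarith)
    have hden : (0:ℝ) < 2*a*s^2 := by positivity
    have hkey : a/2 * s^2 ≤ a*s^2 + b s - Real.log (2*a*s^2) := by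
      have hsplit : Real.log (2*a*s^2) = Real.log (2*a) + 2 * Real.log s := by
        rw [Real.log_mul (by positivity) (by positivity), Real.log_pow]
        push_cast; ring
      rw [hsplit]
      have h2s : 2 * Real.log s ≤ a/4 * s^2 := by
        have : 8 ≤ a * s := by
          rw [div_le_iff₀ ha] at hs8; linarith
        nlinarith [hlogs, hsp]
      nlinarith [hbb, hla, abs_le.mp hbb]
    calc Real.exp (a/2*s^2) ≤ Real.exp (a*s^2 + b s - Real.log (2*a*s^2)) :=
          Real.exp_le_exp.mpr hkey
      _ = f s / (2*a*s^2) := by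
          rw [Real.exp_sub, Real.exp_log hden, hf s]
      _ ≤ f s * Real.log s / (2*a*s^2) := by
          gcongr
          exact le_mul_of_one_le_right (hfpos s).le hlog1
      _ = G s := rfl
  have hgc : ContinuousOn g {(0:ℝ)}ᶜ := by
    rw [hgdef]
    exact ((Real.continuousOn_log.div continuousOn_id fun z hz => hz).mul hfc.continuousOn)
  have hFG : Tendsto (fun s => F s / G s) atTop (nhds 1) := by
    rw [Metric.tendsto_nhds]
    intro η hη
    set δ := min (η/4) (1/2:ℝ) with hδdef
    have hδ0 : 0 < δ := lt_min (by linarith) (by norm_num)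
    have hδη : δ ≤ η/4 := min_le_left _ _
    have hδh : δ ≤ 1/2 := min_le_right _ _
    have hev : ∀ᶠ z in atTop, |eps z| ≤ δ := by
      filter_upwards [Metric.tendsto_nhds.mp heps δ hδ0] with z hz
      rw [Real.dist_eq, sub_zero] at hz
      exact hz.le
    obtain ⟨N, hN⟩ := eventually_atTop.mp hev
    set s₂ := max N (max s₁ 2) with hs₂def
    have hs₂2 : (2:ℝ) ≤ s₂ := le_trans (le_max_right _ _) (le_max_right _ _)
    have hs₂s₁ : s₁ ≤ s₂ := le_trans (le_max_left _ _) (le_max_right _ _)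
    have hs₂N : N ≤ s₂ := le_max_left _ _
    set C := F s₂ with hCdef
    set C₂ := G s₂ with hC₂def
    have hGev : ∀ᶠ s in atTop, 2*(|C|+|C₂|) + η*|C₂| + η ≤ η * G s :=
      (hG'.const_mul_atTop hη).eventually_ge_atTop _
    filter_upwards [eventually_ge_atTop s₂, hGev] with s hss₂ hGs
    have hs2 : (2:ℝ) ≤ s := le_trans hs₂2 hss₂
    -- integrability of g
    have hint1 : IntervalIntegrable g MeasureTheory.volume s₁ s₂ := by
      apply (hgc.mono ?_).intervalIntegrable
      rw [Set.uIcc_of_le hs₂s₁]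
      intro z hz
      simp only [Set.mem_compl_iff, Set.mem_singleton_iff]
      have := hz.1; intro h; rw [h] at this; linarith
    have hint2 : IntervalIntegrable g MeasureTheory.volume s₂ s := by
      apply (hgc.mono ?_).intervalIntegrable
      rw [Set.uIcc_of_le hss₂]
      intro z hz
      simp only [Set.mem_compl_iff, Set.mem_singleton_iff]
      have := hz.1; intro h; rw [h] at this; linarith
    have hsplit : F s = C + ∫ z in s₂..s, g z := by
      rw [hCdef, hFdef]
      exact (intervalIntegral.integral_add_adjacent_intervals hint1 hint2).symm
    set I := ∫ z in s₂..s, g z with hIdef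
    -- pointwise facts on [s₂, s]
    have hg0 : ∀ z ∈ Set.Icc s₂ s, 0 ≤ g z := by
      intro z hz
      have hz1 : (1:ℝ) ≤ z := by linarith [hz.1]
      rw [hgdef]
      exact mul_nonneg (div_nonneg (Real.log_nonneg hz1) (by linarith)) (hfpos z).le
    have heb : ∀ z ∈ Set.Icc s₂ s, |eps z| ≤ δ := fun z hz => hN z (le_trans hs₂N hz.1)
    -- FTC for G
    have hGderiv : ∀ z ∈ Set.uIcc s₂ s, HasDerivAt G (Gd z) z := by
      intro z hz
      rw [Set.uIcc_of_le hss₂] at hz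
      exact hGd' z (by intro h; have := hz.1; rw [h] at this; linarith)
    have hintGd : IntervalIntegrable Gd MeasureTheory.volume s₂ s := by
      apply (hint2.mul_const 2).mono_fun
      · have hdb : Measurable (deriv b) := measurable_deriv b
        have m1 : Measurable f := hfc.measurable
        have mlog : Measurable Real.log := Real.measurable_log
        have msq : Measurable fun z:ℝ => 2*a*z^2 :=
          measurable_const.mul ((measurable_id.pow_const 2))
        rw [hGddef]
        refine Measurable.aestronglyMeasurable ?_
        exact ((((m1.mul ((measurable_const.mul measurable_id).add hdb)).mul mlog).add
            (m1.mul measurable_id.inv)).mul msq |>.sub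
            ((m1.mul mlog).mul (measurable_const.mul (measurable_const.mul measurable_id)))).div
            (msq.pow_const 2)
      · rw [Set.uIoc_of_le hss₂]
        refine (MeasureTheory.ae_restrict_iff' measurableSet_Ioc).2 ?_
        filter_upwards with z hz
        have hz' : z ∈ Set.Icc s₂ s := ⟨hz.1.le, hz.2⟩
        rw [Real.norm_eq_abs, Real.norm_eq_abs, hid z (by linarith [hz'.1] : 1 < z)]
        have h1 := hg0 z hz'
        have h2 := abs_le.mp (heb z hz')
        have h3 : |1 + eps z| ≤ 2 := by
          rw [abs_le]; constructor <;> nlinarith [hδh]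
        calc |g z * (1 + eps z)| = g z * |1 + eps z| := by rw [abs_mul, abs_of_nonneg h1]
          _ ≤ g z * 2 := by nlinarith [abs_nonneg (1 + eps z)]
          _ ≤ |g z * 2| := le_abs_self _
    have hftcG : ∫ z in s₂..s, Gd z = G s - C₂ :=
      intervalIntegral.integral_eq_sub_of_hasDerivAt hGderiv hintGd
    -- comparison inequalities
    have hlow : (1-δ) * I ≤ G s - C₂ := by
      rw [← hftcG, hIdef, ← intervalIntegral.integral_const_mul]
      apply intervalIntegral.integral_mono_on hss₂ (hint2.const_mul _) hintGd
      intro z hz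
      rw [hid z (by linarith [hz.1] : 1 < z)]
      nlinarith [hg0 z hz, abs_le.mp (heb z hz), (abs_le.mp (heb z hz)).1]
    have hhigh : G s - C₂ ≤ (1+δ) * I := by
      rw [← hftcG, hIdef, ← intervalIntegral.integral_const_mul]
      apply intervalIntegral.integral_mono_on hss₂ hintGd (hint2.const_mul _)
      intro z hz
      rw [hid z (by linarith [hz.1] : 1 < z)]
      nlinarith [hg0 z hz, (abs_le.mp (heb z hz)).2]
    have hI0 : 0 ≤ I := intervalIntegral.integral_nonneg hss₂ hg0
    -- arithmetic
    have hGpos : (0:ℝ) < G s := by nlinarith [abs_nonneg C, abs_nonneg C₂]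
    have hD0 : 0 ≤ G s - C₂ := by nlinarith [mul_nonneg (by linarith : (0:ℝ) ≤ 1 - δ) hI0]
    have hID : I - δ * I ≤ G s - C₂ := by nlinarith [hlow]
    have hID' : G s - C₂ ≤ I + δ * I := by nlinarith [hhigh]
    have hI2 : I ≤ 2*(G s - C₂) := by
      have h := mul_le_mul_of_nonneg_right hδh hI0
      nlinarith [hID]
    have hδI2 : δ * I ≤ (η/2) * (G s - C₂) := by
      have h1 : δ * I ≤ (η/4) * I := mul_le_mul_of_nonneg_right hδη hI0
      have h2 : (η/4) * I ≤ (η/4) * (2*(G s - C₂)) :=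
        mul_le_mul_of_nonneg_left hI2 (by linarith)
      linarith
    have hηC₂ : η * C₂ ≤ η * |C₂| := mul_le_mul_of_nonneg_left (le_abs_self C₂) hη.le
    have hηC₂' : -(η * |C₂|) ≤ η * C₂ := by
      have := mul_le_mul_of_nonneg_left (neg_abs_le C₂) hη.le
      linarith [this]
    rw [Real.dist_eq, hsplit]
    have hGne : G s ≠ 0 := ne_of_gt hGpos
    have heq : (C + I)/G s - 1 = (C + I - G s)/G s := by field_simp
    rw [heq, abs_div, abs_of_pos hGpos, div_lt_iff₀ hGpos]
    rw [abs_lt]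
    constructor
    · -- lower bound:  -(η * G s) < C + I - G s
      have hb1 : C - C₂ - (η/2)*(G s - C₂) ≤ C + I - G s := by linarith [hID', hδI2]
      have := neg_abs_le C
      have := neg_abs_le C₂
      nlinarith [hGs, hηC₂, hD0]
    · -- upper bound:  C + I - G s < η * G s
      have hb2 : C + I - G s ≤ C - C₂ + (η/2)*(G s - C₂) := by linarith [hID, hδI2]
      have := le_abs_self C
      have := neg_abs_le C₂
      nlinarith [hGs, hηC₂', hD0]
  -- conclusion
  have hfinal := hFG.mul (tendsto_const_nhds (x := 1/(2*a)))
  rw [one_mul] at hfinal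
  refine Tendsto.congr' ?_ hfinal
  filter_upwards [eventually_ge_atTop (2:ℝ)] with s hs2
  have hs0 : (0:ℝ) < s := by linarith
  have hlogpos : 0 < Real.log s := Real.log_pos (by linarith)
  have hGne : G s ≠ 0 :=
    ne_of_gt (div_pos (mul_pos (hfpos s) hlogpos) (by positivity))
  have hInteq : (∫ (z : ℝ) in s₁..s, g z) = intervalIntegral g s₁ s MeasureTheory.volume := rfl
  rw [hGdef, hFdef]
  simp only [hInteq]
  field_simp [ha0]
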